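/- Let n be divisible by 4 and let C ∈ Mₙ(ℤ) be a symmetric matrix all of whose diagonal entries are even. Let U ∈ Mₙ(ℤ) be the matrix whose strictly upper-triangular part agrees with that of C, whose diagonal is half the diagonal of C, and whose strictly lower-triangular part is zero. Then C = U + Uᵀ and det(C) ≡ det(U − Uᵀ) (mod 4). -/

import Mathlib

open Matrix

section Helpers
open Finset

/-- Determinants of entrywise mod-2-congruent integer matrices agree mod 2. -/
lemma det_dvd_sub_of_entries {m : ℕ} (X Y : Matrix (Fin m) (Fin m) ℤ)
    (h : ∀ i j, (2:ℤ) ∣ X i j - Y i j) : (2:ℤ) ∣ X.det - Y.det := by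
  have : ((X.det : ℤ) : ZMod 2) = (Y.det : ZMod 2) := by
    show (Int.castRingHom (ZMod 2)) X.det = (Int.castRingHom (ZMod 2)) Y.det
    rw [RingHom.map_det, RingHom.map_det]
    congr 1
    ext i j
    simp only [RingHom.mapMatrix_apply, Matrix.map_apply, Int.coe_castRingHom]
    have := (ZMod.intCast_eq_intCast_iff_dvd_sub (Y i j) (X i j) 2).mpr (by exact_mod_cast h i j)
    exact this.symm
  exact (ZMod.intCast_eq_intCast_iff_dvd_sub _ _ 2).mp this.symm |> (by simpa [Int.dvd_neg] using ·)

/-- First-order expansion of the determinant of `X + 2 Y` modulo 4. -/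
lemma det_add_two_smul_mod4 {m : ℕ} (X Y : Matrix (Fin m) (Fin m) ℤ) :
    (4:ℤ) ∣ (X + (2:ℤ) • Y).det - X.det - 2 * ∑ i, (X.updateRow i (Y i)).det := by
  have key : ∀ k : ℕ,
      (4:ℤ) ∣ (Matrix.of fun (i j : Fin m) => if (i:ℕ) < k then X i j + 2 * Y i j else X i j).det
        - X.det - 2 * ∑ i ∈ univ.filter (fun i : Fin m => (i:ℕ) < k),
            (X.updateRow i (Y i)).det := by
    intro k
    induction k with
    | zero =>
      have h1 : (Matrix.of fun (i j : Fin m) => if (i:ℕ) < 0 then X i j + 2 * Y i j else X i j) = X := by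
        ext i j; simp
      rw [h1]; simp
    | succ k ih =>
      by_cases hk : k < m
      · set ik : Fin m := ⟨k, hk⟩ with hik
        have hMk : (Matrix.of fun (i j : Fin m) => if (i:ℕ) < k + 1 then X i j + 2 * Y i j else X i j)
            = (Matrix.of fun (i j : Fin m) => if (i:ℕ) < k then X i j + 2 * Y i j else X i j).updateRow ik
                (fun j => X ik j + 2 * Y ik j) := by
          ext i j
          by_cases hi : i = ik
          · subst hi; simp [Matrix.updateRow_self, ik]
          · have hne : (i:ℕ) ≠ k := fun h => hi (Fin.ext h)
            rw [Matrix.updateRow_ne hi]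
            simp only [Matrix.of_apply]
            have : (i:ℕ) < k + 1 ↔ (i:ℕ) < k := by omega
            rw [if_congr this rfl rfl]
        have hrow : (Matrix.of fun (i j : Fin m) => if (i:ℕ) < k then X i j + 2 * Y i j else X i j) ik
            = X ik := by
          ext j; simp [ik]
        have hdet : (Matrix.of fun (i j : Fin m) => if (i:ℕ) < k + 1 then X i j + 2 * Y i j else X i j).det
            = (Matrix.of fun (i j : Fin m) => if (i:ℕ) < k then X i j + 2 * Y i j else X i j).det
              + 2 * ((Matrix.of fun (i j : Fin m) => if (i:ℕ) < k then X i j + 2 * Y i j else X i j).updateRow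
                  ik (Y ik)).det := by
          rw [hMk]
          have := Matrix.det_updateRow_add
            (Matrix.of fun (i j : Fin m) => if (i:ℕ) < k then X i j + 2 * Y i j else X i j) ik
            (X ik) (fun j => 2 * Y ik j)
          rw [show (fun j => X ik j + 2 * Y ik j) = (X ik + fun j => 2 * Y ik j) from rfl, this]
          rw [show (fun j => 2 * Y ik j) = (2:ℤ) • (Y ik) from rfl, Matrix.det_updateRow_smul]
          rw [← hrow, Matrix.updateRow_eq_self]
        have hcong : (2:ℤ) ∣ ((Matrix.of fun (i j : Fin m) => if (i:ℕ) < k then X i j + 2 * Y i j else X i j).updateRow ik (Y ik)).det - (X.updateRow ik (Y ik)).det := by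
          apply det_dvd_sub_of_entries
          intro i j
          by_cases hi : i = ik
          · subst hi; simp [Matrix.updateRow_self]
          · rw [Matrix.updateRow_ne hi, Matrix.updateRow_ne hi]
            simp only [Matrix.of_apply]
            by_cases h : (i:ℕ) < k <;> simp [h]
        have hfilter : univ.filter (fun i : Fin m => (i:ℕ) < k + 1)
            = insert ik (univ.filter (fun i : Fin m => (i:ℕ) < k)) := by
          ext i
          simp only [mem_filter, mem_univ, true_and, mem_insert]
          constructor
          · intro h
            rcases Nat.lt_succ_iff_lt_or_eq.mp h with h | h
            · exact Or.inr h
            · exact Or.inl (Fin.ext h)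
          · rintro (rfl | h)
            · exact Nat.lt_succ_self k
            · omega
        have hnotmem : ik ∉ univ.filter (fun i : Fin m => (i:ℕ) < k) := by simp [ik]
        rw [hfilter, Finset.sum_insert hnotmem, hdet]
        obtain ⟨c, hc⟩ := hcong
        obtain ⟨d, hd⟩ := ih
        refine ⟨d + c, ?_⟩
        have : ((Matrix.of fun (i j : Fin m) => if (i:ℕ) < k then X i j + 2 * Y i j else X i j).updateRow ik (Y ik)).det = (X.updateRow ik (Y ik)).det + 2 * c := by linarith
        rw [this]
        linarith
      · -- k ≥ m : nothing changes
        have h1 : (Matrix.of fun (i j : Fin m) => if (i:ℕ) < k + 1 then X i j + 2 * Y i j else X i j)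
            = (Matrix.of fun (i j : Fin m) => if (i:ℕ) < k then X i j + 2 * Y i j else X i j) := by
          ext i j
          have hi : (i:ℕ) < k ∧ (i:ℕ) < k + 1 := ⟨by omega, by omega⟩
          simp [hi.1, hi.2, not_lt.mpr hi.1.le]
        have h2 : univ.filter (fun i : Fin m => (i:ℕ) < k + 1)
            = univ.filter (fun i : Fin m => (i:ℕ) < k) := by
          ext i; simp only [mem_filter, mem_univ, true_and]
          constructor <;> intro <;> omega
        rw [h1, h2]; exact ih
  have hfin : (Matrix.of fun (i j : Fin m) => if (i:ℕ) < m then X i j + 2 * Y i j else X i j) = X + (2:ℤ) • Y := by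
    ext i j
    simp only [Matrix.of_apply, Matrix.add_apply, Matrix.smul_apply, smul_eq_mul]
    rw [if_pos i.isLt]
  have hfilter : univ.filter (fun i : Fin m => (i:ℕ) < m) = univ := by
    ext i; simp [i.isLt]
  have := key m
  rw [hfin, hfilter] at this
  exact this

/-- Sum of row-replacement determinants equals a trace against the adjugate. -/
lemma sum_det_updateRow_eq_trace {m : ℕ} (A B : Matrix (Fin m) (Fin m) ℤ) :
    ∑ i, (A.updateRow i (B i)).det = Matrix.trace (B * adjugate A) := by
  have h : ∀ i, (A.updateRow i (B i)).det = (B * adjugate A) i i := by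
    intro i
    rw [← Matrix.cramer_transpose_apply, Matrix.cramer_eq_adjugate_mulVec]
    simp only [Matrix.mulVec, Matrix.mul_apply, dotProduct]
    rw [← Matrix.adjugate_transpose]
    congr 1
    ext j
    rw [Matrix.transpose_apply]
    ring
  simp only [h]
  rfl

end Helpers

/-- Let `4 ∣ n` and let `C ∈ Mₙ(ℤ)` be symmetric with even diagonal.  Let `U` be the
matrix whose strictly upper-triangular part agrees with that of `C`, whose diagonal
is half the diagonal of `C`, and whose strictly lower-triangular part is zero.
Then `C = U + Uᵀ` and `det C ≡ det(U − Uᵀ) (mod 4)`. -/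
theorem det_symm_even_diag_modEq_skew (n : ℕ) (hn : 4 ∣ n)
    (C : Matrix (Fin n) (Fin n) ℤ) (hsymm : C.IsSymm) (hdiag : ∀ i, 2 ∣ C i i) :
    letI U : Matrix (Fin n) (Fin n) ℤ := Matrix.of fun i j =>
      if i < j then C i j else if i = j then C i i / 2 else 0
    C = U + Uᵀ ∧ C.det ≡ (U - Uᵀ).det [ZMOD 4] := by
  set U : Matrix (Fin n) (Fin n) ℤ := Matrix.of fun i j =>
      if i < j then C i j else if i = j then C i i / 2 else 0 with hU
  show C = U + Uᵀ ∧ C.det ≡ (U - Uᵀ).det [ZMOD 4]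
  have hC : C = U + Uᵀ := by
    ext i j
    simp only [Matrix.add_apply, Matrix.transpose_apply, hU, Matrix.of_apply]
    rcases lt_trichotomy i j with h | h | h
    · rw [if_pos h, if_neg (not_lt.mpr h.le), if_neg (ne_of_gt h)]
      ring
    · subst h
      rw [if_neg (lt_irrefl i), if_pos rfl]
      have := hdiag i
      omega
    · rw [if_neg (not_lt.mpr h.le), if_neg (ne_of_gt h), if_pos h]
      rw [hsymm.apply i j]
      ring
  refine ⟨hC, ?_⟩
  set A : Matrix (Fin n) (Fin n) ℤ := U - Uᵀ with hA
  have hCA : C = A + (2:ℤ) • Uᵀ := by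
    rw [hA, hC]; abel
  rcases Nat.eq_zero_or_pos n with h0 | h0
  · subst h0
    simp [Matrix.det_isEmpty]
  · -- adjugate of A is skew-symmetric
    have hAT : Aᵀ = -A := by
      rw [hA, Matrix.transpose_sub, Matrix.transpose_transpose, neg_sub]
    have hodd : Odd (n - 1) := by
      obtain ⟨k, hk⟩ := hn
      refine ⟨2 * k - 1, by omega⟩
    have hadjT : (adjugate A)ᵀ = -adjugate A := by
      rw [Matrix.adjugate_transpose, hAT, show (-A) = (-1 : ℤ) • A by simp,
        Matrix.adjugate_smul]
      simp [Fintype.card_fin, hodd.neg_one_pow]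
    obtain ⟨T, hT⟩ : ∃ T : ℤ, T = Matrix.trace (Uᵀ * adjugate A) := ⟨_, rfl⟩
    have htU : Matrix.trace (U * adjugate A) = -T := by
      rw [← Matrix.trace_transpose (U * adjugate A), Matrix.transpose_mul, hadjT]
      rw [Matrix.neg_mul, Matrix.trace_neg, Matrix.trace_mul_comm, hT]
    have htA : Matrix.trace (A * adjugate A) = A.det * n := by
      rw [Matrix.mul_adjugate, Matrix.trace_smul, Matrix.trace_one]
      simp [Fintype.card_fin, smul_eq_mul]
    have hzero : Matrix.trace (C * adjugate A) = 0 := by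
      rw [hC, Matrix.add_mul, Matrix.trace_add, htU, ← hT]
      ring
    have hsplit : Matrix.trace (C * adjugate A) = A.det * n + 2 * T := by
      rw [hCA, Matrix.add_mul, Matrix.trace_add, htA, Matrix.smul_mul, Matrix.trace_smul,
        ← hT, smul_eq_mul]
    have h2T : 2 * T = -(A.det * n) := by
      rw [hzero] at hsplit; linarith
    have hmain := det_add_two_smul_mod4 A Uᵀ
    rw [sum_det_updateRow_eq_trace A Uᵀ, ← hT] at hmain
    have h4n : (4:ℤ) ∣ A.det * n := by
      obtain ⟨k, hk⟩ := hn
      have hnz : (n:ℤ) = 4 * (k:ℤ) := by exact_mod_cast hk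
      exact ⟨A.det * k, by rw [hnz]; ring⟩
    have hfinal : (4:ℤ) ∣ C.det - A.det := by
      have hCdet : C.det = (A + (2:ℤ) • Uᵀ).det := by rw [← hCA]
      obtain ⟨d, hd⟩ := hmain
      obtain ⟨e, he⟩ := h4n
      refine ⟨d - e, ?_⟩
      rw [hCdet]
      linarith
    exact (Int.modEq_iff_dvd.mpr (dvd_neg.mpr hfinal |>.trans (by rw [neg_sub])))
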